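/- Let k ≥ 4, m ≥ 0 and n ≥ k−1 be integers. Then #{Δ ∈ P_k(m,n) : d_1 = d_{k−1} ≥ 2 and α = ∅} = #{Δ ∈ P_k(m,n+1) : γ^1 = ⋯ = γ^{k−2} = ∅, d_1 = d_2 = ⋯ = d_{k−2} = d_{k−1} + 1 ≥ 2, and α = β = (1^{d_1}), the partition consisting of d_1 parts equal to 1}. -/

import Mathlib

/-- A partition: a finite nonincreasing list of positive integers. -/
structure Partn where
  parts : List ℕ
  sorted : parts.Pairwise (· ≥ ·)
  pos : ∀ x ∈ parts, 0 < x

namespace Partn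

/-- The weight `|λ|` of a partition: the sum of its parts. -/
def wt (p : Partn) : ℕ := p.parts.sum

/-- The length `ℓ(λ)`: the number of parts. -/
def len (p : Partn) : ℕ := p.parts.length

/-- The `j`-th largest part `λ_j` (1-indexed), with `λ_j = 0` for `j > ℓ(λ)`. -/
def part (p : Partn) (j : ℕ) : ℕ := p.parts.getD (j - 1) 0

/-- `f_j(λ)`: the number of parts of `λ` equal to `j`. -/
def freq (p : Partn) (j : ℕ) : ℕ := p.parts.count j

/-- The empty partition. -/
def empty : Partn := ⟨[], List.Pairwise.nil, by simp⟩

end Partn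

/-- The type of `(2k-1)`-tuples `(α, β, γ^1, …, γ^{k-2}, ϖ^1, …, ϖ^{k-1})`. -/
abbrev PTuple (k : ℕ) : Type :=
  Partn × Partn × (Fin (k - 2) → Partn) × (Fin (k - 1) → Partn)

/-- `d_j := ℓ(ϖ^j)` (1-indexed, `0` out of range). -/
def dIdx (k : ℕ) (w : Fin (k - 1) → Partn) (j : ℕ) : ℕ :=
  if h : j - 1 < k - 1 then (w ⟨j - 1, h⟩).len else 0

/-- `γ^j` (1-indexed, the empty partition out of range). -/
def gIdx (k : ℕ) (g : Fin (k - 2) → Partn) (j : ℕ) : Partn :=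
  if h : j - 1 < k - 2 then g ⟨j - 1, h⟩ else Partn.empty

/-- Membership in Garvan-type set `P_k(m, n)` of `(2k-1)`-tuples of partitions. -/
def PkMem (k : ℕ) (m : ℤ) (n : ℕ) (t : PTuple k) : Prop :=
  (∀ i : Fin (k - 1), (t.2.2.2 i).parts =
      List.replicate (t.2.2.2 i).len (t.2.2.2 i).len) ∧
  (∀ j, 1 ≤ j → j + 1 ≤ k - 1 → dIdx k t.2.2.2 (j + 1) ≤ dIdx k t.2.2.2 j) ∧
  1 ≤ dIdx k t.2.2.2 (k - 1) ∧
  (∀ x ∈ t.1.parts, x ≤ dIdx k t.2.2.2 (k - 1)) ∧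
  (∀ x ∈ t.2.1.parts, x ≤ dIdx k t.2.2.2 (k - 1)) ∧
  (t.1.len : ℤ) - (t.2.1.len : ℤ) = m ∧
  (∀ j, 1 ≤ j → j ≤ k - 2 →
      (gIdx k t.2.2.1 j).len ≤ dIdx k t.2.2.2 j - dIdx k t.2.2.2 (j + 1)) ∧
  t.1.wt + t.2.1.wt + (∑ i, (t.2.2.1 i).wt) + (∑ i, (t.2.2.2 i).wt) = n

section Aux

lemma Partn.ext' {p q : Partn} (h : p.parts = q.parts) : p = q := by
  cases p; cases q; simp_all

@[simp] lemma Partn.empty_parts : Partn.empty.parts = [] := rfl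
@[simp] lemma Partn.empty_len : Partn.empty.len = 0 := rfl
@[simp] lemma Partn.empty_wt : Partn.empty.wt = 0 := rfl

/-- The square partition `(d^d)`. -/
def sqp (d : ℕ) : Partn :=
  ⟨List.replicate d d, List.pairwise_replicate.mpr (Or.inr (le_refl d)), by
    intro x hx
    have h := List.eq_of_mem_replicate hx
    have hd : d ≠ 0 := by rintro rfl; simp at hx
    omega⟩

@[simp] lemma sqp_parts (d : ℕ) : (sqp d).parts = List.replicate d d := rfl
@[simp] lemma sqp_len (d : ℕ) : (sqp d).len = d := by simp [Partn.len, sqp]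
@[simp] lemma sqp_wt (d : ℕ) : (sqp d).wt = d * d := by simp [Partn.wt, sqp]

/-- The partition `(1^d)`. -/
def ones (d : ℕ) : Partn :=
  ⟨List.replicate d 1, List.pairwise_replicate.mpr (Or.inr (le_refl 1)), by
    intro x hx
    have h := List.eq_of_mem_replicate hx
    omega⟩

@[simp] lemma ones_parts (d : ℕ) : (ones d).parts = List.replicate d 1 := rfl
@[simp] lemma ones_len (d : ℕ) : (ones d).len = d := by simp [Partn.len, ones]
@[simp] lemma ones_wt (d : ℕ) : (ones d).wt = d := by simp [Partn.wt, ones]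

lemma dIdx_eq {k : ℕ} (w : Fin (k - 1) → Partn) {j : ℕ} (h1 : 1 ≤ j) (h2 : j ≤ k - 1) :
    dIdx k w j = (w ⟨j - 1, by omega⟩).len := by
  simp only [dIdx]
  rw [dif_pos (show j - 1 < k - 1 by omega)]

lemma dIdx_fin {k : ℕ} (w : Fin (k - 1) → Partn) (i : Fin (k - 1)) :
    dIdx k w (i.val + 1) = (w i).len := by
  have hi := i.isLt
  rw [dIdx_eq w (by omega) (by omega)]
  exact congrArg (fun x => (w x).len) (Fin.ext (by simp))

lemma gIdx_eq {k : ℕ} (g : Fin (k - 2) → Partn) {j : ℕ} (h1 : 1 ≤ j) (h2 : j ≤ k - 2) :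
    gIdx k g j = g ⟨j - 1, by omega⟩ := by
  simp only [gIdx]
  rw [dif_pos (show j - 1 < k - 2 by omega)]

lemma gIdx_fin {k : ℕ} (g : Fin (k - 2) → Partn) (i : Fin (k - 2)) :
    gIdx k g (i.val + 1) = g i := by
  have hi := i.isLt
  rw [gIdx_eq g (by omega) (by omega)]
  exact congrArg g (Fin.ext (by simp))

lemma chain_anti {k : ℕ} {w : Fin (k - 1) → Partn}
    (hc : ∀ j, 1 ≤ j → j + 1 ≤ k - 1 → dIdx k w (j + 1) ≤ dIdx k w j) :
    ∀ a b, 1 ≤ a → a ≤ b → b ≤ k - 1 → dIdx k w b ≤ dIdx k w a := by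
  intro a b ha
  induction b with
  | zero => intro hab _; omega
  | succ c ih =>
    intro hab hb
    rcases Nat.eq_or_lt_of_le hab with h | h
    · rw [← h]
    · exact le_trans (hc c (by omega) hb) (ih (by omega) (by omega))

/-- The left-hand side candidate. -/
def Lcand (k d : ℕ) : PTuple k :=
  (Partn.empty, Partn.empty, fun _ => Partn.empty, fun _ => sqp d)

/-- The right-hand side candidate. -/
def Rcand (k d : ℕ) : PTuple k :=
  (ones d, ones d, fun _ => Partn.empty,
    fun i => if (i : ℕ) = k - 2 then sqp (d - 1) else sqp d)

lemma arith_key (k d : ℕ) (hk : 4 ≤ k) (hd : 2 ≤ d) :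
    d + d + ((k - 2) * (d * d) + (d - 1) * (d - 1)) = (k - 1) * (d * d) + 1 := by
  have hE : (d - 1) * (d - 1) + 2 * d = d * d + 1 := by
    obtain ⟨e, rfl⟩ : ∃ e, d = e + 1 := ⟨d - 1, by omega⟩
    simp only [Nat.add_sub_cancel]
    ring
  have hkD : (k - 1) * (d * d) = (k - 2) * (d * d) + d * d := by
    have h : k - 1 = (k - 2) + 1 := by omega
    rw [h]; ring
  linarith

lemma sum_w (k d : ℕ) (hk : 4 ≤ k) :
    (∑ i : Fin (k - 1), (if (i : ℕ) = k - 2 then sqp (d - 1) else sqp d).wt)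
      = (k - 2) * (d * d) + (d - 1) * (d - 1) := by
  have hlast : ((⟨k - 2, by omega⟩ : Fin (k - 1))) ∈ (Finset.univ : Finset (Fin (k - 1))) :=
    Finset.mem_univ _
  rw [← Finset.sum_erase_add _ _ hlast]
  have h1 : ∀ i ∈ Finset.univ.erase (⟨k - 2, by omega⟩ : Fin (k - 1)),
      (if (i : ℕ) = k - 2 then sqp (d - 1) else sqp d).wt = d * d := by
    intro i hi
    rw [if_neg, sqp_wt]
    intro hcon
    exact (Finset.ne_of_mem_erase hi) (Fin.ext hcon)
  rw [Finset.sum_congr rfl h1, Finset.sum_const, Finset.card_erase_of_mem hlast]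
  have hcard : (Finset.univ : Finset (Fin (k - 1))).card - 1 = k - 2 := by
    simp only [Finset.card_univ, Fintype.card_fin]
    omega
  rw [hcard]
  simp [smul_eq_mul]

end Aux

section Iff

lemma left_iff (k : ℕ) (m : ℤ) (n : ℕ) (hk : 4 ≤ k) (hm : 0 ≤ m) (t : PTuple k) :
    (PkMem k m n t ∧ dIdx k t.2.2.2 1 = dIdx k t.2.2.2 (k - 1) ∧ 2 ≤ dIdx k t.2.2.2 1 ∧
      t.1.parts = []) ↔ ∃ d, 2 ≤ d ∧ m = 0 ∧ (k - 1) * (d * d) = n ∧ t = Lcand k d := by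
  obtain ⟨a, b, g, w⟩ := t
  simp only [PkMem, Lcand] at *
  constructor
  · rintro ⟨⟨h1, h2, h3, h4, h5, h6, h7, h8⟩, he1, he2, he3⟩
    set d := dIdx k w 1 with hd
    have hdall : ∀ j, 1 ≤ j → j ≤ k - 1 → dIdx k w j = d := by
      intro j hj1 hj2
      have hle := chain_anti h2 j (k - 1) hj1 hj2 (le_refl _)
      have hge := chain_anti h2 1 j (le_refl 1) hj1 hj2
      omega
    have hw : ∀ i : Fin (k - 1), w i = sqp d := by
      intro i
      have hi := i.isLt
      have hlen : (w i).len = d := by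
        rw [← dIdx_fin w i]
        exact hdall _ (by omega) (by omega)
      apply Partn.ext'
      rw [h1 i, hlen, sqp_parts]
    have ha : a = Partn.empty := Partn.ext' he3
    have halen : a.len = 0 := by simp [Partn.len, he3]
    have hm0 : m = 0 ∧ b.len = 0 := by omega
    have hb : b = Partn.empty := Partn.ext' (List.length_eq_zero_iff.mp hm0.2)
    have hg : ∀ i : Fin (k - 2), g i = Partn.empty := by
      intro i
      have hi := i.isLt
      have h7' := h7 (i.val + 1) (by omega) (by omega)
      rw [gIdx_fin] at h7'
      rw [hdall (i.val + 1) (by omega) (by omega),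
        hdall (i.val + 1 + 1) (by omega) (by omega)] at h7'
      unfold Partn.len at h7'
      exact Partn.ext' (List.length_eq_zero_iff.mp (by omega))
    refine ⟨d, he2, hm0.1, ?_, ?_⟩
    · have hsw : (∑ i, (w i).wt) = (k - 1) * (d * d) := by
        have hc : ∀ i ∈ (Finset.univ : Finset (Fin (k - 1))), (w i).wt = d * d :=
          fun i _ => by rw [hw i, sqp_wt]
        rw [Finset.sum_congr rfl hc, Finset.sum_const]
        simp [Finset.card_univ, smul_eq_mul]
      have hsg : (∑ i, (g i).wt) = 0 :=
        Finset.sum_eq_zero fun i _ => by rw [hg i, Partn.empty_wt]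
      have haw : a.wt = 0 := by rw [ha]; rfl
      have hbw : b.wt = 0 := by rw [hb]; rfl
      omega
    · simp only [Prod.mk.injEq]
      exact ⟨ha, hb, funext hg, funext hw⟩
  · rintro ⟨d, hd2, rfl, rfl, ht⟩
    simp only [Prod.mk.injEq] at ht
    obtain ⟨rfl, rfl, rfl, rfl⟩ := ht
    have hdL : ∀ j, 1 ≤ j → j ≤ k - 1 → dIdx k (fun _ => sqp d) j = d := by
      intro j hj1 hj2
      rw [dIdx_eq _ hj1 hj2, sqp_len]
    refine ⟨⟨?_, ?_, ?_, ?_, ?_, ?_, ?_, ?_⟩, ?_, ?_, ?_⟩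
    · intro i; simp
    · intro j hj1 hj2
      rw [hdL j hj1 (by omega), hdL (j + 1) (by omega) hj2]
    · rw [hdL (k - 1) (by omega) (le_refl _)]; omega
    · intro x hx; simp at hx
    · intro x hx; simp at hx
    · simp
    · intro j hj1 hj2
      have : gIdx k (fun _ => Partn.empty) j = Partn.empty := by
        unfold gIdx; split <;> rfl
      rw [this]; simp
    · simp [Finset.card_univ, smul_eq_mul, Finset.sum_const, mul_comm]
    · rw [hdL 1 (le_refl _) (by omega), hdL (k - 1) (by omega) (le_refl _)]
    · rw [hdL 1 (le_refl _) (by omega)]; exact hd2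
    · rfl

lemma right_iff (k : ℕ) (m : ℤ) (n : ℕ) (hk : 4 ≤ k) (hm : 0 ≤ m) (t : PTuple k) :
    (PkMem k m (n + 1) t ∧
      (∀ j, 1 ≤ j → j ≤ k - 2 → (gIdx k t.2.2.1 j).parts = []) ∧
      (∀ j, 1 ≤ j → j ≤ k - 2 → dIdx k t.2.2.2 j = dIdx k t.2.2.2 (k - 1) + 1) ∧
      2 ≤ dIdx k t.2.2.2 1 ∧
      t.1.parts = List.replicate (dIdx k t.2.2.2 1) 1 ∧
      t.2.1.parts = List.replicate (dIdx k t.2.2.2 1) 1) ↔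
    ∃ d, 2 ≤ d ∧ m = 0 ∧ (k - 1) * (d * d) = n ∧ t = Rcand k d := by
  obtain ⟨a, b, g, w⟩ := t
  simp only [PkMem, Rcand] at *
  constructor
  · rintro ⟨⟨h1, h2, h3, h4, h5, h6, h7, h8⟩, hg0, hD, he2, he5, he6⟩
    set d := dIdx k w 1 with hd
    have he' : dIdx k w (k - 1) = d - 1 := by
      have := hD 1 (le_refl _) (by omega)
      omega
    have hw : ∀ i : Fin (k - 1),
        w i = (if (i : ℕ) = k - 2 then sqp (d - 1) else sqp d) := by
      intro i
      have hi := i.isLt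
      by_cases hc : (i : ℕ) = k - 2
      · have hik : i.val + 1 = k - 1 := by omega
        have hlen : (w i).len = d - 1 := by
          rw [← dIdx_fin w i, hik, he']
        rw [if_pos hc]
        apply Partn.ext'
        rw [h1 i, hlen, sqp_parts]
      · have hlen : (w i).len = d := by
          rw [← dIdx_fin w i, hD (i.val + 1) (by omega) (by omega), he']
          omega
        rw [if_neg hc]
        apply Partn.ext'
        rw [h1 i, hlen, sqp_parts]
    have ha : a = ones d := Partn.ext' (by rw [he5, ones_parts])
    have hb : b = ones d := Partn.ext' (by rw [he6, ones_parts])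
    have halen : a.len = d := by simp [Partn.len, he5]
    have hblen : b.len = d := by simp [Partn.len, he6]
    have hm0 : m = 0 := by omega
    have hg : ∀ i : Fin (k - 2), g i = Partn.empty := by
      intro i
      have hi := i.isLt
      have := hg0 (i.val + 1) (by omega) (by omega)
      rw [gIdx_fin] at this
      exact Partn.ext' this
    refine ⟨d, he2, hm0, ?_, ?_⟩
    · have hsw : (∑ i, (w i).wt) = (k - 2) * (d * d) + (d - 1) * (d - 1) := by
        rw [Finset.sum_congr rfl (fun i _ => by rw [hw i])]
        exact sum_w k d hk
      have hsg : (∑ i, (g i).wt) = 0 :=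
        Finset.sum_eq_zero fun i _ => by rw [hg i, Partn.empty_wt]
      have haw : a.wt = d := by rw [ha, ones_wt]
      have hbw : b.wt = d := by rw [hb, ones_wt]
      have hkey := arith_key k d hk he2
      omega
    · simp only [Prod.mk.injEq]
      exact ⟨ha, hb, funext hg, funext hw⟩
  · rintro ⟨d, hd2, rfl, rfl, ht⟩
    simp only [Prod.mk.injEq] at ht
    obtain ⟨rfl, rfl, rfl, rfl⟩ := ht
    have hdR : ∀ j, 1 ≤ j → j ≤ k - 2 →
        dIdx k (fun i : Fin (k - 1) => if (i : ℕ) = k - 2 then sqp (d - 1) else sqp d) j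
          = d := by
      intro j hj1 hj2
      rw [dIdx_eq _ hj1 (by omega)]
      rw [if_neg (show ¬((⟨j - 1, by omega⟩ : Fin (k - 1)).val = k - 2) from by
        show ¬(j - 1 = k - 2); omega), sqp_len]
    have hdR' :
        dIdx k (fun i : Fin (k - 1) => if (i : ℕ) = k - 2 then sqp (d - 1) else sqp d) (k - 1)
          = d - 1 := by
      rw [dIdx_eq _ (by omega) (le_refl _)]
      rw [if_pos (show (⟨k - 1 - 1, by omega⟩ : Fin (k - 1)).val = k - 2 from by
        show k - 1 - 1 = k - 2; omega), sqp_len]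
    refine ⟨⟨?_, ?_, ?_, ?_, ?_, ?_, ?_, ?_⟩, ?_, ?_, ?_, ?_, ?_⟩
    · intro i
      by_cases hc : (i : ℕ) = k - 2 <;> simp [hc]
    · intro j hj1 hj2
      rcases Nat.eq_or_lt_of_le hj2 with h | h
      · rw [h, hdR',  hdR j hj1 (by omega)]; omega
      · rw [hdR (j + 1) (by omega) (by omega), hdR j hj1 (by omega)]
    · rw [hdR']; omega
    · intro x hx
      rw [hdR']
      simp only [ones_parts] at hx
      have := List.eq_of_mem_replicate hx
      omega
    · intro x hx
      rw [hdR']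
      simp only [ones_parts] at hx
      have := List.eq_of_mem_replicate hx
      omega
    · simp
    · intro j hj1 hj2
      have : gIdx k (fun _ : Fin (k - 2) => Partn.empty) j = Partn.empty := by
        unfold gIdx; split <;> rfl
      rw [this]; simp
    · have hsw := sum_w k d hk
      have hkey := arith_key k d hk hd2
      simp only [ones_wt, Partn.empty_wt, Finset.sum_const_zero]
      rw [hsw]
      linarith
    · intro j hj1 hj2
      have : gIdx k (fun _ : Fin (k - 2) => Partn.empty) j = Partn.empty := by
        unfold gIdx; split <;> rfl
      rw [this]; rfl
    · intro j hj1 hj2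
      rw [hdR j hj1 hj2, hdR']
      omega
    · rw [hdR 1 (le_refl _) (by omega)]; exact hd2
    · rw [hdR 1 (le_refl _) (by omega)]; rfl
    · rw [hdR 1 (le_refl _) (by omega)]; rfl

end Iff

/-- Lemma 5.6 (restated), case `k ≥ 4`. -/
theorem lem_pp3 (k : ℕ) (m : ℤ) (n : ℕ) (hk : 4 ≤ k) (hm : 0 ≤ m)
    (hn : k - 1 ≤ n) :
    {t : PTuple k | PkMem k m n t ∧
        dIdx k t.2.2.2 1 = dIdx k t.2.2.2 (k - 1) ∧ 2 ≤ dIdx k t.2.2.2 1 ∧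
        t.1.parts = []}.ncard =
      {t : PTuple k | PkMem k m (n + 1) t ∧
        (∀ j, 1 ≤ j → j ≤ k - 2 → (gIdx k t.2.2.1 j).parts = []) ∧
        (∀ j, 1 ≤ j → j ≤ k - 2 →
          dIdx k t.2.2.2 j = dIdx k t.2.2.2 (k - 1) + 1) ∧
        2 ≤ dIdx k t.2.2.2 1 ∧
        t.1.parts = List.replicate (dIdx k t.2.2.2 1) 1 ∧
        t.2.1.parts = List.replicate (dIdx k t.2.2.2 1) 1}.ncard := by
  have hL : {t : PTuple k | PkMem k m n t ∧
      dIdx k t.2.2.2 1 = dIdx k t.2.2.2 (k - 1) ∧ 2 ≤ dIdx k t.2.2.2 1 ∧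
      t.1.parts = []} =
      {t : PTuple k | ∃ d, 2 ≤ d ∧ m = 0 ∧ (k - 1) * (d * d) = n ∧ t = Lcand k d} :=
    Set.ext fun t => left_iff k m n hk hm t
  have hR : {t : PTuple k | PkMem k m (n + 1) t ∧
      (∀ j, 1 ≤ j → j ≤ k - 2 → (gIdx k t.2.2.1 j).parts = []) ∧
      (∀ j, 1 ≤ j → j ≤ k - 2 →
        dIdx k t.2.2.2 j = dIdx k t.2.2.2 (k - 1) + 1) ∧
      2 ≤ dIdx k t.2.2.2 1 ∧
      t.1.parts = List.replicate (dIdx k t.2.2.2 1) 1 ∧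
      t.2.1.parts = List.replicate (dIdx k t.2.2.2 1) 1} =
      {t : PTuple k | ∃ d, 2 ≤ d ∧ m = 0 ∧ (k - 1) * (d * d) = n ∧ t = Rcand k d} :=
    Set.ext fun t => right_iff k m n hk hm t
  rw [hL, hR]
  by_cases hex : ∃ d, 2 ≤ d ∧ m = 0 ∧ (k - 1) * (d * d) = n
  · obtain ⟨d, hd2, hm0, hdn⟩ := hex
    have key : ∀ d', (2 ≤ d' ∧ m = 0 ∧ (k - 1) * (d' * d') = n) → d' = d := by
      rintro d' ⟨_, _, hn'⟩
      have h1 : (k - 1) * (d' * d') = (k - 1) * (d * d) := by omega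
      have h2 : d' * d' = d * d := Nat.eq_of_mul_eq_mul_left (by omega) h1
      exact Nat.mul_self_inj.mp h2
    have e1 : {t : PTuple k | ∃ d', 2 ≤ d' ∧ m = 0 ∧ (k - 1) * (d' * d') = n ∧
        t = Lcand k d'} = {Lcand k d} := by
      ext t
      simp only [Set.mem_setOf_eq, Set.mem_singleton_iff]
      constructor
      · rintro ⟨d', h1, h2, h3, rfl⟩
        rw [key d' ⟨h1, h2, h3⟩]
      · rintro rfl
        exact ⟨d, hd2, hm0, hdn, rfl⟩
    have e2 : {t : PTuple k | ∃ d', 2 ≤ d' ∧ m = 0 ∧ (k - 1) * (d' * d') = n ∧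
        t = Rcand k d'} = {Rcand k d} := by
      ext t
      simp only [Set.mem_setOf_eq, Set.mem_singleton_iff]
      constructor
      · rintro ⟨d', h1, h2, h3, rfl⟩
        rw [key d' ⟨h1, h2, h3⟩]
      · rintro rfl
        exact ⟨d, hd2, hm0, hdn, rfl⟩
    rw [e1, e2, Set.ncard_singleton, Set.ncard_singleton]
  · have e1 : {t : PTuple k | ∃ d, 2 ≤ d ∧ m = 0 ∧ (k - 1) * (d * d) = n ∧
        t = Lcand k d} = (∅ : Set (PTuple k)) := by
      apply Set.eq_empty_iff_forall_notMem.mpr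
      rintro t ⟨d, h1, h2, h3, _⟩
      exact hex ⟨d, h1, h2, h3⟩
    have e2 : {t : PTuple k | ∃ d, 2 ≤ d ∧ m = 0 ∧ (k - 1) * (d * d) = n ∧
        t = Rcand k d} = (∅ : Set (PTuple k)) := by
      apply Set.eq_empty_iff_forall_notMem.mpr
      rintro t ⟨d, h1, h2, h3, _⟩
      exact hex ⟨d, h1, h2, h3⟩
    rw [e1, e2]
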